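/- In the drawing D_{a,b,c} of K_{a+b+c} formed by three mutually facing flattened convex arcs with a, b, c points respectively, the edge connecting the m-th vertex of the upper arc (of size a) to the l-th vertex of the lower arc (of size b) is crossed by exactly (m−1)·(b−l) + (l−1)·(a−m) + c·(m+l−2) other edges, where vertices of both arcs are numbered 1..a and 1..b from left to right and the third arc has c points. (Take a = ⌊n/2⌋−i, b = ⌈n/2⌉−j, c = i+j to recover the formula (m−1)(⌈n/2⌉−j−l) + (l−1)(⌊n/2⌋−i−m) + (i+j)(m+l−2) from the paper.) -/
import Mathlib


/-- Combinatorial crossing count in the three-arc drawing `D_{a,b,c}`: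
the edge from the `m`-th upper vertex to the `l`-th lower vertex is crossed exactly
by the upper-lower edges separating it, together with all edges from third-arc
vertices to upper vertices left of `m` or lower vertices left of `l`; the total is
`(m−1)(b−l) + (l−1)(a−m) + c(m+l−2)`. -/
theorem stmt13 (a b c m l : ℕ)
    (hm1 : 1 ≤ m) (hma : m ≤ a) (hl1 : 1 ≤ l) (hlb : l ≤ b) :
    ((Finset.Icc 1 a ×ˢ Finset.Icc 1 b).filter
        (fun p => (p.1 < m ∧ l < p.2) ∨ (m < p.1 ∧ p.2 < l))).card
      + ((Finset.Icc 1 c ×ˢ Finset.Icc 1 a).filter (fun p => p.2 < m)).card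
      + ((Finset.Icc 1 c ×ˢ Finset.Icc 1 b).filter (fun p => p.2 < l)).card
    = (m - 1) * (b - l) + (l - 1) * (a - m) + c * (m + l - 2) := by
  have h1 : ((Finset.Icc 1 a ×ˢ Finset.Icc 1 b).filter
        (fun p => (p.1 < m ∧ l < p.2) ∨ (m < p.1 ∧ p.2 < l)))
      = (Finset.Ico 1 m ×ˢ Finset.Icc (l+1) b) ∪ (Finset.Icc (m+1) a ×ˢ Finset.Ico 1 l) := by
    ext ⟨x, y⟩
    simp only [Finset.mem_filter, Finset.mem_product, Finset.mem_union, Finset.mem_Icc,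
      Finset.mem_Ico]
    omega
  have hdisj : Disjoint (Finset.Ico 1 m ×ˢ Finset.Icc (l+1) b)
      (Finset.Icc (m+1) a ×ˢ Finset.Ico 1 l) := by
    rw [Finset.disjoint_left]
    rintro ⟨x, y⟩ h1 h2
    simp only [Finset.mem_product, Finset.mem_Icc, Finset.mem_Ico] at h1 h2
    omega
  have h2 : ((Finset.Icc 1 c ×ˢ Finset.Icc 1 a).filter (fun p => p.2 < m))
      = Finset.Icc 1 c ×ˢ Finset.Ico 1 m := by
    ext ⟨x, y⟩
    simp only [Finset.mem_filter, Finset.mem_product, Finset.mem_Icc, Finset.mem_Ico]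
    omega
  have h3 : ((Finset.Icc 1 c ×ˢ Finset.Icc 1 b).filter (fun p => p.2 < l))
      = Finset.Icc 1 c ×ˢ Finset.Ico 1 l := by
    ext ⟨x, y⟩
    simp only [Finset.mem_filter, Finset.mem_product, Finset.mem_Icc, Finset.mem_Ico]
    omega
  rw [h1, h2, h3, Finset.card_union_of_disjoint hdisj]
  simp only [Finset.card_product, Nat.card_Icc, Nat.card_Ico]
  have e1 : a + 1 - (m + 1) = a - m := by omega
  have e2 : b + 1 - (l + 1) = b - l := by omega
  have e3 : c + 1 - 1 = c := by omega
  rw [e1, e2, e3]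
  have h2l : 2 ≤ m + l := by omega
  zify [hm1, hl1, hma, hlb, h2l]
  ring
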